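/- arXiv:1403.6799 — 2 statements merged into one kernel-verified Lean document; each statement's English description precedes it below -/
import Mathlib

section
/- Let (S_n) be a random walk under a probability measure Q with S_0 = 0, i.i.d. increments, E_Q(S_1) = 0 and 0 < E_Q(S_1²) < ∞. Fix β ≥ 0 and b > 0. Then E_Q[ Σ_{j=1}^{∞} e^{−b S_j} · 1{ S_i ≥ −β for all i ≤ j } ] is finite. -/
open MeasureTheory ProbabilityTheory Filter Topology
open scoped ENNReal NNReal

/-- integrability of a r.v. with finite second moment -/
lemma integrable_of_sq {Ω : Type*} [MeasurableSpace Ω] (μ : Measure Ω) [IsProbabilityMeasure μ]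
    (X : Ω → ℝ) (hX : Measurable X) (hsq : Integrable (fun ω => X ω ^ 2) μ) :
    Integrable X μ := by
  refine ((integrable_const (1:ℝ)).add hsq).mono' hX.aestronglyMeasurable ?_
  refine Eventually.of_forall fun ω => ?_
  rw [Real.norm_eq_abs]
  simp only [Pi.add_apply]
  nlinarith [sq_nonneg (|X ω| - 1), sq_abs (X ω), abs_nonneg (X ω)]

/-- Step A: truncated exponential moment exceeds 1. -/
lemma exists_trunc_exp_gt {Ω : Type*} [MeasurableSpace Ω] (μ : Measure Ω)
    [IsProbabilityMeasure μ] (X : Ω → ℝ) (hX : Measurable X)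
    (hmean : ∫ ω, X ω ∂μ = 0)
    (hsq : Integrable (fun ω => X ω ^ 2) μ)
    (hpos : 0 < ∫ ω, X ω ^ 2 ∂μ) (b : ℝ) (hb : 0 < b) :
    ∃ (K : ℕ) (δ : ℝ), 0 < δ ∧
      1 + δ ≤ ∫ ω, Set.indicator {ω' | |X ω'| ≤ (K : ℝ)}
          (fun ω' => Real.exp (-b * X ω')) ω ∂μ := by
  have hint1 : Integrable X μ := integrable_of_sq μ X hX hsq
  -- the positive "gain" function
  set f : ℝ → ℝ := fun t => Real.exp (-b * t) - 1 + b * t with hf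
  have hf_nonneg : ∀ t, 0 ≤ f t := by
    intro t
    have := Real.add_one_le_exp (-(b * t))
    simp only [hf, neg_mul]
    linarith
  have hf_pos : ∀ t, t ≠ 0 → 0 < f t := by
    intro t ht
    have := Real.add_one_lt_exp (x := -(b * t)) (by
      simp only [ne_eq, neg_eq_zero, mul_eq_zero, not_or]
      exact ⟨hb.ne', ht⟩)
    simp only [hf, neg_mul]
    linarith
  -- X is nonzero with positive probability
  have hne : μ {ω | X ω ≠ 0} ≠ 0 := by
    intro h0
    have hae : ∀ᵐ ω ∂μ, X ω = 0 := by
      rw [ae_iff]; simpa using h0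
    have : (∫ ω, X ω ^ 2 ∂μ) = 0 := by
      have h2 : (fun ω => X ω ^ 2) =ᵐ[μ] (fun _ => (0:ℝ)) :=
        hae.mono fun ω hω => by simp [hω]
      rw [integral_congr_ae h2]; simp
    exact hpos.ne' this
  -- choose a level N with positive probability of 0 < |X| ≤ N
  have hEx : ∃ N : ℕ, μ {ω | X ω ≠ 0 ∧ |X ω| ≤ (N : ℝ)} ≠ 0 := by
    by_contra h
    push_neg at h
    have : μ (⋃ N : ℕ, {ω | X ω ≠ 0 ∧ |X ω| ≤ (N : ℝ)}) = 0 :=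
      measure_iUnion_null h
    have hU : (⋃ N : ℕ, {ω | X ω ≠ 0 ∧ |X ω| ≤ (N : ℝ)}) = {ω | X ω ≠ 0} := by
      ext ω
      simp only [Set.mem_iUnion, Set.mem_setOf_eq]
      constructor
      · rintro ⟨N, h1, _⟩; exact h1
      · intro h1
        obtain ⟨N, hN⟩ := exists_nat_ge |X ω|
        exact ⟨N, h1, hN⟩
    rw [hU] at this
    exact hne this
  obtain ⟨N, hN⟩ := hEx
  -- integrability facts
  have hmeasE : ∀ c : ℝ, MeasurableSet {ω | |X ω| ≤ c} :=
    fun c => measurableSet_le (hX.abs) measurable_const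
  have hint_exp : ∀ c : ℝ, Integrable
      (fun ω => Set.indicator {ω' | |X ω'| ≤ c} (fun ω' => Real.exp (-b * X ω')) ω) μ := by
    intro c
    refine (integrable_const (Real.exp (b * c))).mono'
      (((Measurable.exp (hX.const_mul (-b))).indicator (hmeasE c)).aestronglyMeasurable) ?_
    refine Eventually.of_forall fun ω => ?_
    rw [Real.norm_eq_abs]
    by_cases hω : ω ∈ {ω' | |X ω'| ≤ c}
    · rw [Set.indicator_of_mem hω]
      rw [abs_of_pos (Real.exp_pos _)]
      apply Real.exp_le_exp.2
      have : |X ω| ≤ c := hω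
      nlinarith [neg_abs_le (X ω), abs_nonneg (X ω)]
    · rw [Set.indicator_of_notMem hω]
      simp [Real.exp_nonneg, (Real.exp_pos (b*c)).le]
  have hmeas_fX : Measurable fun ω => f (X ω) := by
    simp only [hf]
    exact ((Measurable.exp (hX.const_mul (-b))).sub measurable_const).add (hX.const_mul b)
  have hint_lin : ∀ c : ℝ, Integrable
      (fun ω => Set.indicator {ω' | |X ω'| ≤ c} (fun ω' => 1 - b * X ω') ω) μ :=
    fun c => ((integrable_const (1:ℝ)).sub (hint1.const_mul b)).indicator (hmeasE c)
  have hint_f : ∀ c : ℝ, Integrable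
      (fun ω => Set.indicator {ω' | |X ω'| ≤ c} (fun ω' => f (X ω')) ω) μ := by
    intro c
    have heq : (fun ω => Set.indicator {ω' | |X ω'| ≤ c} (fun ω' => f (X ω')) ω)
        = (fun ω => Set.indicator {ω' | |X ω'| ≤ c} (fun ω' => Real.exp (-b * X ω')) ω)
          + (fun ω => Set.indicator {ω' | |X ω'| ≤ c} (fun ω' => b * X ω' - 1) ω) := by
      funext ω
      by_cases hω : ω ∈ {ω' | |X ω'| ≤ c} <;>
        simp [Set.indicator_of_mem, Set.indicator_of_notMem, hω, hf] <;> ring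
    rw [heq]
    exact (hint_exp c).add (((hint1.const_mul b).sub (integrable_const 1)).indicator (hmeasE c))
  -- the positive mass m
  set m : ℝ := ∫ ω, Set.indicator {ω' | |X ω'| ≤ (N:ℝ)} (fun ω' => f (X ω')) ω ∂μ with hm_def
  have hm : 0 < m := by
    rw [hm_def, integral_pos_iff_support_of_nonneg_ae]
    · refine lt_of_lt_of_le ?_ (measure_mono ?_ : μ {ω | X ω ≠ 0 ∧ |X ω| ≤ (N:ℝ)} ≤ _)
      · exact zero_lt_iff.mpr hN
      · intro ω hω
        simp only [Function.mem_support]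
        rw [Set.indicator_of_mem (by exact hω.2 : ω ∈ {ω' | |X ω'| ≤ (N:ℝ)})]
        exact (hf_pos _ hω.1).ne'
    · exact Eventually.of_forall fun ω => Set.indicator_nonneg (fun ω' _ => hf_nonneg _) ω
    · exact hint_f _
  -- tails tend to zero
  set g : ℕ → Ω → ℝ := fun n ω =>
    Set.indicator {ω' | (n:ℝ) < |X ω'|} (fun ω' => 1 + b * |X ω'|) ω with hg_def
  have hint_g : ∀ n : ℕ, Integrable (g n) μ := by
    intro n
    exact ((integrable_const (1:ℝ)).add (hint1.abs.const_mul b)).indicator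
      (measurableSet_lt measurable_const hX.abs)
  have htail : Tendsto (fun n => ∫ ω, g n ω ∂μ) atTop (𝓝 0) := by
    have h0 : (0:ℝ) = ∫ (_ : Ω), (0:ℝ) ∂μ := by simp
    rw [h0]
    apply tendsto_integral_of_dominated_convergence (fun ω => 1 + b * |X ω|)
    · exact fun n => (hint_g n).aestronglyMeasurable
    · exact (integrable_const (1:ℝ)).add (hint1.abs.const_mul b)
    · intro n
      refine Eventually.of_forall fun ω => ?_
      rw [Real.norm_eq_abs,
        show g n ω = Set.indicator {ω' | (n:ℝ) < |X ω'|} (fun ω' => 1 + b * |X ω'|) ω from rfl]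
      by_cases hω : ω ∈ {ω' | ((n:ℕ):ℝ) < |X ω'|}
      · rw [Set.indicator_of_mem hω]
        rw [abs_of_nonneg (by positivity)]
      · rw [Set.indicator_of_notMem hω]
        simp
        positivity
    · refine Eventually.of_forall fun ω => ?_
      obtain ⟨M, hM⟩ := exists_nat_ge |X ω|
      refine Filter.Tendsto.congr' ?_ tendsto_const_nhds
      filter_upwards [eventually_ge_atTop M] with n hn
      rw [show g n ω = Set.indicator {ω' | (n:ℝ) < |X ω'|} (fun ω' => 1 + b * |X ω'|) ω from rfl,
        Set.indicator_of_notMem (by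
          simp only [Set.mem_setOf_eq, not_lt]
          exact hM.trans (by exact_mod_cast hn))]
  -- pick K
  obtain ⟨K, hK1, hK2⟩ := ((htail.eventually (gt_mem_nhds (half_pos hm))).and
    (eventually_ge_atTop N)).exists
  refine ⟨K, m/2, half_pos hm, ?_⟩
  set E : Set Ω := {ω' | |X ω'| ≤ (K:ℝ)} with hE_def
  -- split exp = linear + f
  have hsplit : (∫ ω, Set.indicator E (fun ω' => Real.exp (-b * X ω')) ω ∂μ)
      = (∫ ω, Set.indicator E (fun ω' => 1 - b * X ω') ω ∂μ)
        + ∫ ω, Set.indicator E (fun ω' => f (X ω')) ω ∂μ := by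
    rw [← integral_add (hint_lin _) (hint_f _)]
    congr 1
    funext ω
    by_cases hω : ω ∈ {ω' | |X ω'| ≤ (K:ℝ)} <;>
      simp [Set.indicator_of_mem, Set.indicator_of_notMem, hω, hf, hE_def] <;> ring
  have hfpart : m ≤ ∫ ω, Set.indicator E (fun ω' => f (X ω')) ω ∂μ := by
    rw [hm_def]
    refine integral_mono (hint_f _) (hint_f _) fun ω => ?_
    by_cases hω : ω ∈ {ω' | |X ω'| ≤ (N:ℝ)}
    · rw [Set.indicator_of_mem hω, Set.indicator_of_mem]
      have hNK : (N:ℝ) ≤ (K:ℝ) := by exact_mod_cast hK2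
      exact le_trans (by exact hω) hNK
    · rw [Set.indicator_of_notMem hω]
      exact Set.indicator_nonneg (fun ω' _ => hf_nonneg _) ω
  have hlinpart : 1 - ∫ ω, g K ω ∂μ ≤ ∫ ω, Set.indicator E (fun ω' => 1 - b * X ω') ω ∂μ := by
    have hpt : ∀ ω, Set.indicator E (fun ω' => 1 - b * X ω') ω
        = (1 - b * X ω) - Set.indicator {ω' | ((K:ℕ):ℝ) < |X ω'|} (fun ω' => 1 - b * X ω') ω := by
      intro ω
      by_cases hω : ω ∈ E
      · rw [Set.indicator_of_mem hω, Set.indicator_of_notMem (by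
          simp only [Set.mem_setOf_eq, not_lt]; exact hω)]
        ring
      · rw [Set.indicator_of_notMem hω, Set.indicator_of_mem (by
          simp only [hE_def, Set.mem_setOf_eq, not_le] at hω
          exact hω)]
        ring
    have hint_lin2 : Integrable
        (fun ω => Set.indicator {ω' | ((K:ℕ):ℝ) < |X ω'|} (fun ω' => 1 - b * X ω') ω) μ :=
      ((integrable_const (1:ℝ)).sub (hint1.const_mul b)).indicator
        (measurableSet_lt measurable_const hX.abs)
    calc 1 - ∫ ω, g K ω ∂μ
        ≤ (∫ ω, (1 - b * X ω) ∂μ)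
          - ∫ ω, Set.indicator {ω' | ((K:ℕ):ℝ) < |X ω'|} (fun ω' => 1 - b * X ω') ω ∂μ := by
          have hint_lin1 : Integrable (fun ω => 1 - b * X ω) μ := by
            exact (integrable_const (1:ℝ)).sub (hint1.const_mul b)
          have h1 : (∫ ω, (1 - b * X ω) ∂μ) = 1 := by
            rw [integral_sub (integrable_const 1) (hint1.const_mul b)]
            rw [integral_const_mul, hmean]
            simp
          rw [h1]
          have h2 : (∫ ω, Set.indicator {ω' | ((K:ℕ):ℝ) < |X ω'|}
              (fun ω' => 1 - b * X ω') ω ∂μ) ≤ ∫ ω, g K ω ∂μ := by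
            refine integral_mono hint_lin2 (hint_g K) fun ω => ?_
            by_cases hω : ω ∈ {ω' | ((K:ℕ):ℝ) < |X ω'|}
            · rw [Set.indicator_of_mem hω]
              have hrfl : g K ω = Set.indicator {ω' | ((K:ℕ):ℝ) < |X ω'|}
                  (fun ω' => 1 + b * |X ω'|) ω := rfl
              rw [hrfl, Set.indicator_of_mem hω]
              nlinarith [neg_abs_le (X ω), abs_nonneg (X ω)]
            · rw [Set.indicator_of_notMem hω]
              have hrfl : g K ω = Set.indicator {ω' | ((K:ℕ):ℝ) < |X ω'|}
                  (fun ω' => 1 + b * |X ω'|) ω := rfl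
              rw [hrfl, Set.indicator_of_notMem hω]
          linarith
      _ = ∫ ω, Set.indicator E (fun ω' => 1 - b * X ω') ω ∂μ := by
          have hint_lin1 : Integrable (fun ω => 1 - b * X ω) μ := by
            exact (integrable_const (1:ℝ)).sub (hint1.const_mul b)
          rw [← integral_sub hint_lin1 hint_lin2]
          exact integral_congr_ae (Eventually.of_forall fun ω => (hpt ω).symm)
  rw [hsplit]
  have := hK1.le
  linarith

/-- The random walk with increments `ξ`: `S n = ξ 0 + ⋯ + ξ (n-1)`, `S 0 = 0`. -/
noncomputable def walk {Ω : Type*} (ξ : ℕ → Ω → ℝ) (n : ℕ) (ω : Ω) : ℝ :=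
  ∑ i ∈ Finset.range n, ξ i ω

/-- Real drift estimate for the truncated exponential potential. -/
lemma drift_real {Ω : Type*} [MeasurableSpace Ω] (μ : Measure Ω)
    [IsProbabilityMeasure μ] (X : Ω → ℝ) (hX : Measurable X)
    (b β δ c : ℝ) (hb : 0 < b) (hc : 0 ≤ c)
    (hK : 1 + δ ≤ ∫ ω, Set.indicator {ω' | |X ω'| ≤ c}
        (fun ω' => Real.exp (-b * X ω')) ω ∂μ)
    (x : ℝ) (hx : -β ≤ x) :
    Real.exp (-b * x) + δ * Real.exp (-b * x)
      ≤ ∫ ω, Real.exp (-b * max (x + X ω) (-β - c)) ∂μ := by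
  set a : ℝ := -β - c with ha
  set E : Set Ω := {ω' | |X ω'| ≤ c} with hE
  have hmeasE : MeasurableSet E := measurableSet_le hX.abs measurable_const
  have hψ_meas : Measurable fun ω => Real.exp (-b * max (x + X ω) a) :=
    (((hX.const_add x).max measurable_const).const_mul (-b)).exp
  have hψ_int : Integrable (fun ω => Real.exp (-b * max (x + X ω) a)) μ := by
    refine (integrable_const (Real.exp (-b * a))).mono' hψ_meas.aestronglyMeasurable ?_
    refine Eventually.of_forall fun ω => ?_
    rw [Real.norm_eq_abs, abs_of_pos (Real.exp_pos _)]
    apply Real.exp_le_exp.2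
    have := le_max_right (x + X ω) a
    nlinarith
  have hind_int : Integrable (fun ω => Set.indicator E
      (fun ω' => Real.exp (-b * (x + X ω'))) ω) μ := by
    refine (integrable_const (Real.exp (-b * (x - c)))).mono'
      (((((hX.const_add x)).const_mul (-b)).exp.indicator hmeasE).aestronglyMeasurable) ?_
    refine Eventually.of_forall fun ω => ?_
    rw [Real.norm_eq_abs]
    by_cases hω : ω ∈ E
    · rw [Set.indicator_of_mem hω, abs_of_pos (Real.exp_pos _)]
      apply Real.exp_le_exp.2
      have h1 : |X ω| ≤ c := hω
      nlinarith [neg_abs_le (X ω)]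
    · rw [Set.indicator_of_notMem hω]
      simp [(Real.exp_pos _).le]
  have h1 : (∫ ω, Set.indicator E (fun ω' => Real.exp (-b * (x + X ω'))) ω ∂μ)
      ≤ ∫ ω, Real.exp (-b * max (x + X ω) a) ∂μ := by
    refine integral_mono hind_int hψ_int fun ω => ?_
    by_cases hω : ω ∈ E
    · rw [Set.indicator_of_mem hω]
      apply Real.exp_le_exp.2
      have h1 : |X ω| ≤ c := hω
      have h2 : a ≤ x + X ω := by
        have := neg_abs_le (X ω)
        simp only [ha]
        linarith
      rw [max_eq_left h2]
    · rw [Set.indicator_of_notMem hω]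
      exact (Real.exp_pos _).le
  have h2 : (∫ ω, Set.indicator E (fun ω' => Real.exp (-b * (x + X ω'))) ω ∂μ)
      = Real.exp (-b * x) * ∫ ω, Set.indicator E (fun ω' => Real.exp (-b * X ω')) ω ∂μ := by
    rw [← integral_const_mul]
    congr 1
    funext ω
    by_cases hω : ω ∈ E
    · rw [Set.indicator_of_mem hω, Set.indicator_of_mem hω, ← Real.exp_add]
      ring_nf
    · rw [Set.indicator_of_notMem hω, Set.indicator_of_notMem hω, mul_zero]
  have h3 : Real.exp (-b * x) * (1 + δ)
      ≤ Real.exp (-b * x) * ∫ ω, Set.indicator E (fun ω' => Real.exp (-b * X ω')) ω ∂μ :=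
    mul_le_mul_of_nonneg_left hK (Real.exp_pos _).le
  calc Real.exp (-b * x) + δ * Real.exp (-b * x) = Real.exp (-b * x) * (1 + δ) := by ring
    _ ≤ _ := h3
    _ = _ := h2.symm
    _ ≤ _ := h1

/-- For a centered random walk with finite positive variance, `β ≥ 0` and `b > 0`,
`E[ Σ_{j≥1} e^{-b S_j} 1{S_i ≥ -β, ∀ i ≤ j} ] < ∞` (Lemma B.2 of Aïdékon). -/
theorem exp_weighted_occupation_finite {Ω : Type*} [MeasurableSpace Ω]
    (μ : Measure Ω) [IsProbabilityMeasure μ] (ξ : ℕ → Ω → ℝ)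
    (hmeas : ∀ i, Measurable (ξ i))
    (hindep : iIndepFun ξ μ)
    (hident : ∀ i, IdentDistrib (ξ i) (ξ 0) μ μ)
    (hmean : ∫ ω, ξ 0 ω ∂μ = 0)
    (hsq_int : Integrable (fun ω => (ξ 0 ω) ^ 2) μ)
    (hsq_pos : 0 < ∫ ω, (ξ 0 ω) ^ 2 ∂μ)
    (β b : ℝ) (hβ : 0 ≤ β) (hb : 0 < b) :
    (∫⁻ ω, ∑' j : ℕ,
        Set.indicator {ω' | ∀ i ≤ j + 1, -β ≤ walk ξ i ω'}
          (fun ω' => ENNReal.ofReal (Real.exp (-b * walk ξ (j + 1) ω'))) ω ∂μ)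
      < ⊤ := by
  classical
  obtain ⟨K, δ, hδ, hK⟩ := exists_trunc_exp_gt μ (ξ 0) (hmeas 0) hmean hsq_int hsq_pos b hb
  set c : ℝ := (K : ℝ) with hc_def
  have hc : 0 ≤ c := Nat.cast_nonneg K
  set a : ℝ := -β - c with ha_def
  set capR : ℝ := Real.exp (-b * a) with hcapR
  set ψ : ℝ → ℝ := fun x => Real.exp (-b * max x a) with hψ
  have hψ_le : ∀ x, ψ x ≤ capR := by
    intro x
    apply Real.exp_le_exp.2
    have := le_max_right x a
    nlinarith
  have hψ_meas : Measurable ψ :=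
    (((measurable_id.max measurable_const)).const_mul (-b)).exp
  -- ENNReal quantities
  set capE : ℝ≥0∞ := ENNReal.ofReal capR with hcapE
  set dE : ℝ≥0∞ := ENNReal.ofReal δ with hdE
  set W : ℝ → ℝ≥0∞ := fun x => ENNReal.ofReal (Real.exp (-b * x)) with hW
  set Ψ : ℝ → ℝ≥0∞ := fun x => ENNReal.ofReal (ψ x) with hΨ
  set G : ℝ → ℝ≥0∞ := fun x => capE - Ψ x with hG
  have hW_meas : Measurable W :=
    ENNReal.measurable_ofReal.comp ((measurable_id.const_mul (-b)).exp)
  have hΨ_meas : Measurable Ψ := ENNReal.measurable_ofReal.comp hψ_meas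
  have hG_meas : Measurable G := measurable_const.sub hΨ_meas
  have hΨ_le : ∀ x, Ψ x ≤ capE := fun x => ENNReal.ofReal_le_ofReal (hψ_le x)
  have hG_le : ∀ x, G x ≤ capE := fun x => tsub_le_self
  have hcapE_ne : capE ≠ ⊤ := ENNReal.ofReal_ne_top
  -- ENNReal drift estimate
  have hdriftE : ∀ x : ℝ, -β ≤ x →
      (∫⁻ ω, G (x + ξ 0 ω) ∂μ) + dE * W x ≤ G x := by
    intro x hx
    have hψx_int : Integrable (fun ω => ψ (x + ξ 0 ω)) μ := by
      refine (integrable_const capR).mono'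
        ((hψ_meas.comp ((hmeas 0).const_add x)).aestronglyMeasurable) ?_
      refine Eventually.of_forall fun ω => ?_
      rw [Real.norm_eq_abs, abs_of_pos (Real.exp_pos _)]
      exact hψ_le _
    have hIψ : (∫⁻ ω, Ψ (x + ξ 0 ω) ∂μ) = ENNReal.ofReal (∫ ω, ψ (x + ξ 0 ω) ∂μ) :=
      (ofReal_integral_eq_lintegral_ofReal hψx_int
        (Eventually.of_forall fun ω => (Real.exp_pos _).le)).symm
    have hψx : ψ x = Real.exp (-b * x) := by
      simp only [hψ]
      rw [max_eq_left (by simp only [ha_def]; linarith)]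
    have hIψ_ge : Ψ x + dE * W x ≤ ∫⁻ ω, Ψ (x + ξ 0 ω) ∂μ := by
      have h1 : Ψ x = ENNReal.ofReal (Real.exp (-b * x)) := by
        simp only [hΨ]; rw [hψx]
      rw [hIψ, h1]
      simp only [hdE, hW]
      rw [← ENNReal.ofReal_mul hδ.le, ← ENNReal.ofReal_add
        (Real.exp_pos _).le (by positivity)]
      exact ENNReal.ofReal_le_ofReal
        (drift_real μ (ξ 0) (hmeas 0) b β δ c hb hc hK x hx)
    have hIψ_le : (∫⁻ ω, Ψ (x + ξ 0 ω) ∂μ) ≤ capE := by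
      calc (∫⁻ ω, Ψ (x + ξ 0 ω) ∂μ) ≤ ∫⁻ _, capE ∂μ := lintegral_mono fun ω => hΨ_le _
        _ = capE := by simp
    have hsum : (∫⁻ ω, G (x + ξ 0 ω) ∂μ) + (∫⁻ ω, Ψ (x + ξ 0 ω) ∂μ) = capE := by
      have h2 : (∫⁻ ω, (G (x + ξ 0 ω) + Ψ (x + ξ 0 ω)) ∂μ) = capE := by
        have h3 : ∀ ω, G (x + ξ 0 ω) + Ψ (x + ξ 0 ω) = capE := fun ω => by
          simp only [hG]
          exact tsub_add_cancel_of_le (hΨ_le _)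
        rw [lintegral_congr h3]
        simp
      rw [← h2]
      exact (lintegral_add_right _ (hΨ_meas.comp ((hmeas 0).const_add x))).symm
    have hΨx_ne : Ψ x ≠ ⊤ := ENNReal.ofReal_ne_top
    refine ENNReal.le_sub_of_add_le_right hΨx_ne ?_
    calc (∫⁻ ω, G (x + ξ 0 ω) ∂μ) + dE * W x + Ψ x
        = (∫⁻ ω, G (x + ξ 0 ω) ∂μ) + (Ψ x + dE * W x) := by ring
      _ ≤ (∫⁻ ω, G (x + ξ 0 ω) ∂μ) + ∫⁻ ω, Ψ (x + ξ 0 ω) ∂μ := by gcongr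
      _ = capE := hsum
  -- walk basics
  have hS_meas : ∀ n, Measurable (walk ξ n) := by
    intro n
    unfold walk
    exact Finset.measurable_sum _ fun i _ => hmeas i
  have hwalk_succ : ∀ n (ω : Ω), walk ξ (n + 1) ω = walk ξ n ω + ξ n ω := by
    intro n ω
    unfold walk
    exact Finset.sum_range_succ _ n
  -- events and indicators
  set A : ℕ → Set Ω := fun n => {ω | ∀ i ≤ n, -β ≤ walk ξ i ω} with hA
  have hA_meas : ∀ n, MeasurableSet (A n) := by
    intro n
    have : A n = ⋂ i, ⋂ (_ : i ≤ n), {ω | -β ≤ walk ξ i ω} := by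
      ext ω; simp [hA]
    rw [this]
    exact MeasurableSet.iInter fun i => MeasurableSet.iInter fun _ =>
      measurableSet_le measurable_const (hS_meas i)
  set In : ℕ → Ω → ℝ≥0∞ := fun n => Set.indicator (A n) (fun _ => (1:ℝ≥0∞)) with hIn
  have hIn_meas : ∀ n, Measurable (In n) := fun n =>
    measurable_const.indicator (hA_meas n)
  have hIn_le_one : ∀ n ω, In n ω ≤ 1 := by
    intro n ω
    by_cases hω : ω ∈ A n
    · simp only [hIn]; rw [Set.indicator_of_mem hω]
    · simp only [hIn]; rw [Set.indicator_of_notMem hω]; exact zero_le_one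
  have hIn_mono : ∀ n ω, In (n+1) ω ≤ In n ω := by
    intro n ω
    by_cases hω : ω ∈ A (n+1)
    · have hω' : ω ∈ A n := fun i hi => hω i (hi.trans (Nat.le_succ n))
      simp only [hIn]; rw [Set.indicator_of_mem hω, Set.indicator_of_mem hω']
    · simp only [hIn]; rw [Set.indicator_of_notMem hω]; exact zero_le
  -- the two sequences of integrals
  set t : ℕ → ℝ≥0∞ := fun n => ∫⁻ ω, In n ω * W (walk ξ n ω) ∂μ with ht
  set u : ℕ → ℝ≥0∞ := fun n => ∫⁻ ω, In n ω * G (walk ξ n ω) ∂μ with hu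
  -- the key one-step inequality
  have hstep : ∀ n, u (n+1) + dE * t n ≤ u n := by
    intro n
    -- the past vector
    have hdisj : Disjoint (Finset.range n) ({n} : Finset ℕ) := by
      simp [Finset.disjoint_singleton_right]
    have hXv_meas : Measurable (fun ω (i : ↥(Finset.range n)) => ξ i ω) :=
      measurable_pi_lambda _ fun i => hmeas i
    have hindXY : IndepFun (fun ω (i : ↥(Finset.range n)) => ξ i ω) (ξ n) μ := by
      have h := hindep.indepFun_finset (Finset.range n) {n} hdisj hmeas
      exact h.comp measurable_id (measurable_pi_apply ⟨n, Finset.mem_singleton_self n⟩)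
    -- partial sums as a function of the past vector
    set pw := fun (v : ↥(Finset.range n) → ℝ) (i : ℕ) =>
      ∑ k ∈ Finset.range i, if h : k ∈ Finset.range n then v ⟨k, h⟩ else 0 with hpw
    have hpw_meas : ∀ i, Measurable fun v : ↥(Finset.range n) → ℝ => pw v i := by
      intro i
      apply Finset.measurable_sum
      intro k _
      by_cases h : k ∈ Finset.range n
      · simpa [h] using measurable_pi_apply (⟨k, h⟩ : ↥(Finset.range n))
      · simpa [h] using measurable_const
    have hpw_walk : ∀ (ω : Ω), ∀ i ≤ n, pw (fun j => ξ j ω) i = walk ξ i ω := by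
      intro ω i hi
      simp only [hpw]
      unfold walk
      apply Finset.sum_congr rfl
      intro k hk
      have hkn : k ∈ Finset.range n :=
        Finset.mem_range.mpr (lt_of_lt_of_le (Finset.mem_range.mp hk) hi)
      simp [hkn]
    set Sset := {v : ↥(Finset.range n) → ℝ | ∀ i ≤ n, -β ≤ pw v i}
      with hSset
    have hSset_meas : MeasurableSet Sset := by
      have : Sset = ⋂ i, ⋂ (_ : i ≤ n), {v | -β ≤ pw v i} := by
        ext v; simp [hSset]
      rw [this]
      exact MeasurableSet.iInter fun i => MeasurableSet.iInter fun _ =>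
        measurableSet_le measurable_const (hpw_meas i)
    set H := fun p : (↥(Finset.range n) → ℝ) × ℝ =>
      Set.indicator Sset (fun _ => (1:ℝ≥0∞)) p.1 * (G (pw p.1 n + p.2) + dE * W (pw p.1 n))
      with hH
    have hH_meas : Measurable H := by
      apply Measurable.mul
      · exact (measurable_const.indicator hSset_meas).comp measurable_fst
      · apply Measurable.fun_add
        · exact hG_meas.comp (((hpw_meas n).comp measurable_fst).add measurable_snd)
        · exact measurable_const.mul (hW_meas.comp ((hpw_meas n).comp measurable_fst))
    -- instances
    haveI : IsProbabilityMeasure (μ.map (fun ω (i : ↥(Finset.range n)) => ξ i ω)) :=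
      Measure.isProbabilityMeasure_map hXv_meas.aemeasurable
    haveI : IsProbabilityMeasure (μ.map (ξ n)) :=
      Measure.isProbabilityMeasure_map (hmeas n).aemeasurable
    haveI : IsProbabilityMeasure (μ.map (ξ 0)) :=
      Measure.isProbabilityMeasure_map (hmeas 0).aemeasurable
    -- step 1: shrink the indicator
    have h1 : u (n+1) ≤ ∫⁻ ω, In n ω * G (walk ξ (n+1) ω) ∂μ := by
      rw [hu]
      exact lintegral_mono fun ω => mul_le_mul_left (hIn_mono n ω) _
    -- step 2: rewrite as a function of (past, fresh) and use independence
    have h2 : (∫⁻ ω, In n ω * G (walk ξ (n+1) ω) ∂μ) + dE * t n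
        = ∫⁻ ω, H ((fun i : ↥(Finset.range n) => ξ i ω), ξ n ω) ∂μ := by
      have hals : ∀ ω, H ((fun i : ↥(Finset.range n) => ξ i ω), ξ n ω)
          = In n ω * G (walk ξ (n+1) ω) + dE * (In n ω * W (walk ξ n ω)) := by
        intro ω
        have hmem : ((fun i : ↥(Finset.range n) => ξ i ω) ∈ Sset)
            ↔ ω ∈ A n := by
          simp only [hSset, hA, Set.mem_setOf_eq]
          constructor
          · intro hv i hi
            have := hv i hi
            rwa [hpw_walk ω i hi] at this
          · intro hω i hi
            rw [hpw_walk ω i hi]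
            exact hω i hi
        have hpwn : pw (fun j : ↥(Finset.range n) => ξ j ω) n = walk ξ n ω :=
          hpw_walk ω n le_rfl
        by_cases hω : ω ∈ A n
        · have hv : (fun i : ↥(Finset.range n) => ξ i ω) ∈ Sset := hmem.mpr hω
          simp only [hH, hIn]
          rw [Set.indicator_of_mem hv, Set.indicator_of_mem hω]
          simp only [one_mul, hpwn, hwalk_succ n ω]
        · have hv : (fun i : ↥(Finset.range n) => ξ i ω) ∉ Sset := fun hc =>
            hω (hmem.mp hc)
          simp only [hH, hIn]
          rw [Set.indicator_of_notMem hv, Set.indicator_of_notMem hω]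
          simp
      have hmeas1 : Measurable fun ω => In n ω * G (walk ξ (n+1) ω) :=
        (hIn_meas n).mul (hG_meas.comp (hS_meas (n+1)))
      have hmeas2 : Measurable fun ω => In n ω * W (walk ξ n ω) :=
        (hIn_meas n).mul (hW_meas.comp (hS_meas n))
      calc (∫⁻ ω, In n ω * G (walk ξ (n+1) ω) ∂μ) + dE * t n
          = (∫⁻ ω, In n ω * G (walk ξ (n+1) ω) ∂μ)
            + ∫⁻ ω, dE * (In n ω * W (walk ξ n ω)) ∂μ := by
            rw [ht, lintegral_const_mul _ hmeas2]
        _ = ∫⁻ ω, In n ω * G (walk ξ (n+1) ω) + dE * (In n ω * W (walk ξ n ω)) ∂μ :=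
            (lintegral_add_right _ (measurable_const.mul hmeas2)).symm
        _ = _ := (lintegral_congr fun ω => hals ω).symm
    -- step 3: Tonelli via independence
    have h3 : (∫⁻ ω, H ((fun i : ↥(Finset.range n) => ξ i ω), ξ n ω) ∂μ)
        = ∫⁻ v, ∫⁻ y, H (v, y) ∂(μ.map (ξ n))
            ∂(μ.map (fun ω (i : ↥(Finset.range n)) => ξ i ω)) := by
      rw [← lintegral_map hH_meas (hXv_meas.prodMk (hmeas n)),
        (indepFun_iff_map_prod_eq_prod_map_map hXv_meas.aemeasurable
          (hmeas n).aemeasurable).mp hindXY,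
        lintegral_prod _ hH_meas.aemeasurable]
    -- step 4: the inner integral is dominated via the drift inequality
    have h4 : ∀ v : ↥(Finset.range n) → ℝ,
        (∫⁻ y, H (v, y) ∂(μ.map (ξ n)))
          ≤ Set.indicator Sset (fun _ => (1:ℝ≥0∞)) v * G (pw v n) := by
      intro v
      by_cases hv : v ∈ Sset
      · rw [Set.indicator_of_mem hv, one_mul]
        have hHv : ∀ y, H (v, y) = G (pw v n + y) + dE * W (pw v n) := by
          intro y
          simp only [hH]
          rw [Set.indicator_of_mem hv, one_mul]
        calc (∫⁻ y, H (v, y) ∂(μ.map (ξ n)))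
            = ∫⁻ y, (G (pw v n + y) + dE * W (pw v n)) ∂(μ.map (ξ n)) :=
              lintegral_congr fun y => hHv y
          _ = (∫⁻ y, G (pw v n + y) ∂(μ.map (ξ n))) + dE * W (pw v n) := by
              rw [lintegral_add_right _ measurable_const]
              simp
          _ = (∫⁻ ω, G (pw v n + ξ 0 ω) ∂μ) + dE * W (pw v n) := by
              have hm : Measurable fun y : ℝ => G (pw v n + y) :=
                hG_meas.comp (measurable_id.const_add _)
              rw [(hident n).map_eq, lintegral_map hm (hmeas 0)]
          _ ≤ G (pw v n) := hdriftE (pw v n) (hv n le_rfl)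
      · rw [Set.indicator_of_notMem hv, zero_mul]
        have hHv : ∀ y, H (v, y) = 0 := by
          intro y
          simp only [hH]
          rw [Set.indicator_of_notMem hv, zero_mul]
        rw [lintegral_congr fun y => hHv y]
        simp
    -- step 5: transfer back
    have h5 : (∫⁻ v, Set.indicator Sset (fun _ => (1:ℝ≥0∞)) v * G (pw v n)
          ∂(μ.map (fun ω (i : ↥(Finset.range n)) => ξ i ω))) = u n := by
      have hm5 : Measurable fun v : ↥(Finset.range n) → ℝ =>
          Set.indicator Sset (fun _ => (1:ℝ≥0∞)) v * G (pw v n) :=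
        (measurable_const.indicator hSset_meas).mul (hG_meas.comp (hpw_meas n))
      rw [lintegral_map hm5 hXv_meas]
      rw [hu]
      apply lintegral_congr
      intro ω
      have hmem : ((fun i : ↥(Finset.range n) => ξ i ω) ∈ Sset) ↔ ω ∈ A n := by
        simp only [hSset, hA, Set.mem_setOf_eq]
        constructor
        · intro hv i hi
          have := hv i hi
          rwa [hpw_walk ω i hi] at this
        · intro hω i hi
          rw [hpw_walk ω i hi]
          exact hω i hi
      have hpwn : pw (fun j : ↥(Finset.range n) => ξ j ω) n = walk ξ n ω :=
        hpw_walk ω n le_rfl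
      by_cases hω : ω ∈ A n
      · simp only [hIn]
        rw [Set.indicator_of_mem (hmem.mpr hω), Set.indicator_of_mem hω, hpwn]
      · simp only [hIn]
        rw [Set.indicator_of_notMem (fun hc => hω (hmem.mp hc)),
          Set.indicator_of_notMem hω, hpwn]
    calc u (n+1) + dE * t n
        ≤ (∫⁻ ω, In n ω * G (walk ξ (n+1) ω) ∂μ) + dE * t n := by gcongr
      _ = ∫⁻ ω, H ((fun i : ↥(Finset.range n) => ξ i ω), ξ n ω) ∂μ := h2
      _ = ∫⁻ v, ∫⁻ y, H (v, y) ∂(μ.map (ξ n))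
            ∂(μ.map (fun ω (i : ↥(Finset.range n)) => ξ i ω)) := h3
      _ ≤ ∫⁻ v, Set.indicator Sset (fun _ => (1:ℝ≥0∞)) v * G (pw v n)
            ∂(μ.map (fun ω (i : ↥(Finset.range n)) => ξ i ω)) :=
            lintegral_mono fun v => h4 v
      _ = u n := h5
  -- base of the induction
  have hu0 : u 0 ≤ capE := by
    rw [hu]
    calc (∫⁻ ω, In 0 ω * G (walk ξ 0 ω) ∂μ) ≤ ∫⁻ _, capE ∂μ :=
        lintegral_mono fun ω => by
          calc In 0 ω * G (walk ξ 0 ω) ≤ 1 * capE :=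
              mul_le_mul' (hIn_le_one 0 ω) (hG_le _)
            _ = capE := one_mul _
      _ = capE := by simp
  have hind2 : ∀ N, u N + ∑ n ∈ Finset.range N, dE * t n ≤ capE := by
    intro N
    induction N with
    | zero => simpa using hu0
    | succ N ih =>
      rw [Finset.sum_range_succ]
      calc u (N+1) + (∑ n ∈ Finset.range N, dE * t n + dE * t N)
          = (u (N+1) + dE * t N) + ∑ n ∈ Finset.range N, dE * t n := by ring
        _ ≤ u N + ∑ n ∈ Finset.range N, dE * t n := by
            exact add_le_add_left (hstep N) _
        _ ≤ capE := ih
  have hdE0 : dE ≠ 0 := (ENNReal.ofReal_pos.mpr hδ).ne'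
  have hdEtop : dE ≠ ⊤ := ENNReal.ofReal_ne_top
  have hsum_le : (∑' n, dE * t n) ≤ capE :=
    ENNReal.tsum_le_of_sum_range_le fun N => le_trans le_add_self (hind2 N)
  have htsum : (∑' n, t n) ≤ capE / dE := by
    rw [ENNReal.le_div_iff_mul_le (Or.inl hdE0) (Or.inl hdEtop), mul_comm,
      ← ENNReal.tsum_mul_left]
    exact hsum_le
  have hfin : (∑' n, t n) < ⊤ :=
    lt_of_le_of_lt htsum (ENNReal.div_lt_top hcapE_ne hdE0)
  -- assemble
  have hterm_meas : ∀ j : ℕ, Measurable fun ω =>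
      Set.indicator {ω' | ∀ i ≤ j + 1, -β ≤ walk ξ i ω'}
        (fun ω' => ENNReal.ofReal (Real.exp (-b * walk ξ (j + 1) ω'))) ω :=
    fun j => (ENNReal.measurable_ofReal.comp
      (((hS_meas (j+1)).const_mul (-b)).exp)).indicator (hA_meas (j+1))
  rw [lintegral_tsum fun j => (hterm_meas j).aemeasurable]
  have hterm_eq : ∀ j : ℕ, (∫⁻ ω, Set.indicator {ω' | ∀ i ≤ j + 1, -β ≤ walk ξ i ω'}
      (fun ω' => ENNReal.ofReal (Real.exp (-b * walk ξ (j + 1) ω'))) ω ∂μ) = t (j+1) := by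
    intro j
    rw [ht]
    apply lintegral_congr
    intro ω
    by_cases hω : ω ∈ A (j+1)
    · rw [Set.indicator_of_mem (by exact hω)]
      simp only [hIn, hW]
      rw [Set.indicator_of_mem hω, one_mul]
    · rw [Set.indicator_of_notMem (by exact hω)]
      simp only [hIn]
      rw [Set.indicator_of_notMem hω, zero_mul]
  calc (∑' j, ∫⁻ ω, Set.indicator {ω' | ∀ i ≤ j + 1, -β ≤ walk ξ i ω'}
        (fun ω' => ENNReal.ofReal (Real.exp (-b * walk ξ (j + 1) ω'))) ω ∂μ)
      = ∑' j, t (j+1) := tsum_congr hterm_eq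
    _ ≤ ∑' n, t n := by
        have h := ENNReal.tsum_comp_le_tsum_of_injective
          (f := fun j : ℕ => j + 1) (fun p q hpq => Nat.succ_injective hpq) t
        simpa [Function.comp] using h
    _ < ⊤ := hfin
end

section
/- Let (S_n) be a centered random walk with i.i.d. increments, 0 < E(S_1²) < ∞, and E(e^{a S_1}) < ∞ for all 0 ≤ a < δ, some δ > 0. Let H_b = inf{ i ≥ 0 : S_i ≥ b } and ΔS_{H_b} = S_{H_b} − S_{H_b − 1} (the jump at the first passage over b). Then there exists a constant c > 0 such that sup_{b>0} E[ exp(c · ΔS_{H_b}) ] < ∞. -/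
open MeasureTheory ProbabilityTheory
open scoped ENNReal

/-- First passage time `inf {i ≥ 0 : S i ≥ b}`, with value `⊤` if there is none. -/
noncomputable def hitAbove₀ {Ω : Type*} (S : ℕ → Ω → ℝ) (b : ℝ) (ω : Ω) : ℕ∞ :=
  sInf ((fun i : ℕ => (i : ℕ∞)) '' {i : ℕ | b ≤ S i ω})




private lemma bdd_integrable {Ω : Type*} [MeasurableSpace Ω] (μ : Measure Ω)
    [IsProbabilityMeasure μ] {g : Ω → ℝ} (hg : Measurable g) (K : ℝ)
    (hK : ∀ ω, |g ω| ≤ K) : Integrable g μ := by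
  refine Integrable.mono' (integrable_const K) hg.aestronglyMeasurable
    (Filter.Eventually.of_forall fun ω => ?_)
  simpa [Real.norm_eq_abs] using hK ω

private lemma exp_gt_one {Ω : Type*} [MeasurableSpace Ω] (μ : Measure Ω) [IsProbabilityMeasure μ]
    (ξ0 : Ω → ℝ) (hm : Measurable ξ0) (hmean : ∫ ω, ξ0 ω ∂μ = 0)
    (hsq_int : Integrable (fun ω => ξ0 ω ^ 2) μ) (hsq_pos : 0 < ∫ ω, ξ0 ω ^ 2 ∂μ)
    (a : ℝ) (ha : 0 < a) (hint : Integrable (fun ω => Real.exp (a * ξ0 ω)) μ) :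
    1 < ∫ ω, Real.exp (a * ξ0 ω) ∂μ := by
  have hξ : Integrable ξ0 μ := by
    refine Integrable.mono' ((hsq_int.add (integrable_const 1)).div_const 2)
      hm.aestronglyMeasurable (Filter.Eventually.of_forall fun ω => ?_)
    rw [Real.norm_eq_abs]
    simp only [Pi.add_apply]
    nlinarith [sq_nonneg (|ξ0 ω| - 1), sq_abs (ξ0 ω)]
  set g := fun ω => Real.exp (a * ξ0 ω) - 1 - a * ξ0 ω with hgdef
  have hgint : Integrable g μ := (hint.sub (integrable_const 1)).sub (hξ.const_mul a)
  have hgnn : 0 ≤ g := by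
    intro ω
    have := Real.add_one_le_exp (a * ξ0 ω)
    simp only [hgdef, Pi.zero_apply]
    linarith
  have hgeq : ∫ ω, g ω ∂μ = (∫ ω, Real.exp (a * ξ0 ω) ∂μ) - 1 := by
    have h1 : Integrable (fun ω => Real.exp (a * ξ0 ω) - 1) μ := hint.sub (integrable_const 1)
    have : ∫ ω, g ω ∂μ = ∫ ω, (Real.exp (a * ξ0 ω) - 1) - a * ξ0 ω ∂μ := rfl
    rw [this, integral_sub h1 (hξ.const_mul a),
      integral_sub hint (integrable_const 1), integral_const_mul, hmean]
    simp
  have hne : ∫ ω, g ω ∂μ ≠ 0 := by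
    intro h0
    have hae : g =ᵐ[μ] 0 := (integral_eq_zero_iff_of_nonneg hgnn hgint).mp h0
    have hae2 : (fun ω => ξ0 ω ^ 2) =ᵐ[μ] 0 := by
      refine hae.mono fun ω hω => ?_
      simp only [hgdef, Pi.zero_apply] at hω ⊢
      by_contra hne2
      have hx : a * ξ0 ω ≠ 0 := by
        refine mul_ne_zero ha.ne' fun h => hne2 ?_
        rw [h]; ring
      have := Real.add_one_lt_exp hx
      linarith
    have : ∫ ω, ξ0 ω ^ 2 ∂μ = 0 := by
      rw [integral_congr_ae hae2]; simp
    linarith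
  have hpos : 0 < ∫ ω, g ω ∂μ := lt_of_le_of_ne (integral_nonneg hgnn) (Ne.symm hne)
  rw [hgeq] at hpos
  linarith



private noncomputable def psum (n i : ℕ) (v : Fin n → ℝ) : ℝ :=
  ∑ j ∈ Finset.range i, (if h : j < n then v ⟨j, h⟩ else 0)

private lemma psum_meas (n i : ℕ) : Measurable (psum n i) := by
  refine Finset.measurable_sum _ fun j _ => ?_
  by_cases h : j < n
  · simpa [h] using measurable_pi_apply (⟨j, h⟩ : Fin n)
  · simp [h]

private lemma psum_walk {Ω : Type*} (ξ : ℕ → Ω → ℝ) (n i : ℕ) (hi : i ≤ n) (ω : Ω) :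
    psum n i (fun j : Fin n => ξ j ω) = walk ξ i ω := by
  refine Finset.sum_congr rfl fun j hj => ?_
  have hjn : j < n := lt_of_lt_of_le (Finset.mem_range.mp hj) hi
  simp [hjn]

private lemma indep_tuple {Ω : Type*} [MeasurableSpace Ω] {μ : Measure Ω} (ξ : ℕ → Ω → ℝ)
    (hmeas : ∀ i, Measurable (ξ i))
    (hindep : iIndepFun ξ μ) (n : ℕ) :
    IndepFun (fun ω (i : Fin n) => ξ i ω) (ξ n) μ := by
  have hd : Disjoint (Finset.range n) ({n} : Finset ℕ) := by
    simp only [Finset.disjoint_left, Finset.mem_range, Finset.mem_singleton]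
    omega
  have h := hindep.indepFun_finset (Finset.range n) {n} hd hmeas
  have h2 := h.comp
    (φ := fun (w : {x // x ∈ Finset.range n} → ℝ) (i : Fin n) =>
      w ⟨(i : ℕ), Finset.mem_range.mpr i.isLt⟩)
    (ψ := fun (w : {x // x ∈ ({n} : Finset ℕ)} → ℝ) => w ⟨n, Finset.mem_singleton_self n⟩)
    (measurable_pi_lambda _ fun i => measurable_pi_apply _)
    (measurable_pi_apply (X := fun _ => ℝ) _)
  exact h2

private lemma ident_lint {Ω : Type*} [MeasurableSpace Ω] {μ : Measure Ω} (ξ : ℕ → Ω → ℝ)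
    (hmeas : ∀ i, Measurable (ξ i)) (hident : ∀ i, IdentDistrib (ξ i) (ξ 0) μ μ) (n : ℕ)
    (g : ℝ → ℝ≥0∞) (hg : Measurable g) :
    ∫⁻ ω, g (ξ n ω) ∂μ = ∫⁻ ω, g (ξ 0 ω) ∂μ := by
  rw [← lintegral_map hg (hmeas n), ← lintegral_map hg (hmeas 0), (hident n).map_eq]

private lemma factor_lemma {Ω : Type*} [MeasurableSpace Ω] (μ : Measure Ω) [IsProbabilityMeasure μ]
    (ξ : ℕ → Ω → ℝ) (hmeas : ∀ i, Measurable (ξ i))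
    (hindep : iIndepFun ξ μ)
    (hident : ∀ i, IdentDistrib (ξ i) (ξ 0) μ μ) (n : ℕ)
    (Φ : ((Fin n → ℝ) × ℝ) → ℝ≥0∞) (hΦ : Measurable Φ) :
    ∫⁻ ω, Φ (fun i : Fin n => ξ i ω, ξ n ω) ∂μ
      = ∫⁻ ω, ∫⁻ ω', Φ (fun i : Fin n => ξ i ω, ξ 0 ω') ∂μ ∂μ := by
  set X : Ω → (Fin n → ℝ) := fun ω i => ξ i ω with hX
  have hXm : Measurable X := measurable_pi_lambda _ fun i => hmeas i
  have hYm : Measurable (ξ n) := hmeas n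
  have hInd : IndepFun X (ξ n) μ := indep_tuple ξ hmeas hindep n
  have hprod := (indepFun_iff_map_prod_eq_prod_map_map hXm.aemeasurable hYm.aemeasurable).mp hInd
  haveI : IsProbabilityMeasure (μ.map X) := Measure.isProbabilityMeasure_map hXm.aemeasurable
  haveI : IsProbabilityMeasure (μ.map (ξ n)) := Measure.isProbabilityMeasure_map hYm.aemeasurable
  haveI : IsProbabilityMeasure (μ.map (ξ 0)) := Measure.isProbabilityMeasure_map (hmeas 0).aemeasurable
  have inner_meas : Measurable fun v => ∫⁻ x, Φ (v, x) ∂(μ.map (ξ 0)) :=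
    Measurable.lintegral_prod_right' hΦ
  calc ∫⁻ ω, Φ (X ω, ξ n ω) ∂μ
      = ∫⁻ z, Φ z ∂(μ.map fun ω => (X ω, ξ n ω)) :=
        (lintegral_map hΦ (hXm.prodMk hYm)).symm
    _ = ∫⁻ z, Φ z ∂((μ.map X).prod (μ.map (ξ n))) := by rw [hprod]
    _ = ∫⁻ v, ∫⁻ x, Φ (v, x) ∂(μ.map (ξ n)) ∂(μ.map X) := lintegral_prod _ hΦ.aemeasurable
    _ = ∫⁻ v, ∫⁻ x, Φ (v, x) ∂(μ.map (ξ 0)) ∂(μ.map X) := by rw [(hident n).map_eq]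
    _ = ∫⁻ ω, ∫⁻ x, Φ (X ω, x) ∂(μ.map (ξ 0)) ∂μ := lintegral_map inner_meas hXm
    _ = ∫⁻ ω, ∫⁻ ω', Φ (X ω, ξ 0 ω') ∂μ ∂μ := by
        refine lintegral_congr fun ω => ?_
        exact lintegral_map (hΦ.comp measurable_prodMk_left) (hmeas 0)
set_option maxHeartbeats 1600000 in
private lemma super_lemma {Ω : Type*} [MeasurableSpace Ω] (μ : Measure Ω) [IsProbabilityMeasure μ]
    (ξ0 : Ω → ℝ) (hm : Measurable ξ0) (η ε : ℝ) (hη : 0 < η) (hηε : η ≤ ε)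
    (hintη : Integrable (fun ω => Real.exp (η * ξ0 ω)) μ)
    (hint2η : Integrable (fun ω => Real.exp (2 * η * ξ0 ω)) μ)
    (hφη : 1 < ∫ ω, Real.exp (η * ξ0 ω) ∂μ) :
    ∃ C₀ q : ℝ, 0 < C₀ ∧ 0 < q ∧ q ≤ 1 / 2 ∧ ∀ t : ℝ, 0 < t →
      (∫⁻ ω, (if ξ0 ω < t then
          ENNReal.ofReal (C₀ * (1 - q * Real.exp (-η * (t - ξ0 ω)))) else 0) ∂μ)
        + ENNReal.ofReal (Real.exp (-ε * t))
        ≤ ENNReal.ofReal (C₀ * (1 - q * Real.exp (-η * t))) := by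
  classical
  set φη := ∫ ω, Real.exp (η * ξ0 ω) ∂μ with hφηdef
  clear_value φη
  set φ2 := ∫ ω, Real.exp (2 * η * ξ0 ω) ∂μ with hφ2def
  clear_value φ2
  have hφ2pos : 0 < φ2 := by
    have hpt : ∀ ω, 2 * Real.exp (η * ξ0 ω) - 1 ≤ Real.exp (2 * η * ξ0 ω) := by
      intro ω
      have he : Real.exp (2 * η * ξ0 ω) = Real.exp (η * ξ0 ω) * Real.exp (η * ξ0 ω) := by
        rw [← Real.exp_add]; ring_nf
      nlinarith [sq_nonneg (Real.exp (η * ξ0 ω) - 1)]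
    have h1 : Integrable (fun ω => 2 * Real.exp (η * ξ0 ω) - 1) μ :=
      (hintη.const_mul 2).sub (integrable_const 1)
    have h2 : Integrable (fun ω => 2 * Real.exp (η * ξ0 ω)) μ := hintη.const_mul 2
    have h21 := integral_mono h1 hint2η hpt
    have heq : ∫ ω, (2 * Real.exp (η * ξ0 ω) - 1) ∂μ = 2 * φη - 1 := by
      rw [integral_sub h2 (integrable_const 1), integral_const_mul, ← hφηdef]
      simp
    rw [heq, ← hφ2def] at h21
    linarith
  have hgap : 0 < φη - 1 := by linarith
  set p := (φη - 1) ^ 2 / (16 * φ2) with hpdef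
  clear_value p
  have hp : 0 < p := by
    rw [hpdef]
    exact div_pos (pow_pos hgap 2) (by linarith)
  set q := min p 1 / 2 with hqdef
  clear_value q
  have hminpos : 0 < min p 1 := lt_min hp one_pos
  have hq0 : 0 < q := by rw [hqdef]; linarith
  have hq12 : q ≤ 1 / 2 := by
    have := min_le_right p 1
    rw [hqdef]; linarith
  have hqp2 : q ≤ p / 2 := by
    have := min_le_left p 1
    rw [hqdef]; linarith
  set C₀ := max (2 / (q * (φη - 1))) (2 / p) with hC₀def
  clear_value C₀
  have hC₀pos : 0 < C₀ := by
    rw [hC₀def]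
    exact lt_of_lt_of_le (div_pos two_pos hp) (le_max_right _ _)
  have hqh : 0 < q * (φη - 1) := by positivity
  have hC₀qh : 2 ≤ C₀ * (q * (φη - 1)) := by
    have h1 : 2 / (q * (φη - 1)) ≤ C₀ := by rw [hC₀def]; exact le_max_left _ _
    calc (2:ℝ) = 2 / (q * (φη - 1)) * (q * (φη - 1)) := by field_simp
    _ ≤ C₀ * (q * (φη - 1)) := mul_le_mul_of_nonneg_right h1 hqh.le
  have hC₀p : 2 ≤ C₀ * p := by
    have h1 : 2 / p ≤ C₀ := by rw [hC₀def]; exact le_max_right _ _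
    calc (2:ℝ) = 2 / p * p := by field_simp
    _ ≤ C₀ * p := mul_le_mul_of_nonneg_right h1 hp.le
  refine ⟨C₀, q, hC₀pos, hq0, hq12, fun t ht => ?_⟩
  have hAm : MeasurableSet {ω | ξ0 ω < t} := measurableSet_lt hm measurable_const
  have hAm' : MeasurableSet {ω | t ≤ ξ0 ω} := measurableSet_le measurable_const hm
  -- integrable pieces
  have hind1 : Integrable (fun ω => if ξ0 ω < t then (1:ℝ) else 0) μ := by
    refine bdd_integrable μ (Measurable.ite hAm measurable_const measurable_const) 1 fun ω => ?_
    split <;> simp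
  have hind1' : Integrable (fun ω => if t ≤ ξ0 ω then (1:ℝ) else 0) μ := by
    refine bdd_integrable μ (Measurable.ite hAm' measurable_const measurable_const) 1 fun ω => ?_
    split <;> simp
  have hindE : Integrable (fun ω => if ξ0 ω < t then Real.exp (η * ξ0 ω) else 0) μ := by
    refine (hintη.indicator hAm).congr (Filter.Eventually.of_forall fun ω => ?_)
    simp [Set.indicator_apply]
  have hindE' : Integrable (fun ω => if t ≤ ξ0 ω then Real.exp (η * ξ0 ω) else 0) μ := by
    refine (hintη.indicator hAm').congr (Filter.Eventually.of_forall fun ω => ?_)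
    simp [Set.indicator_apply]
  set Plt := ∫ ω, (if ξ0 ω < t then (1:ℝ) else 0) ∂μ with hPltdef
  clear_value Plt
  set Pge := ∫ ω, (if t ≤ ξ0 ω then (1:ℝ) else 0) ∂μ with hPgedef
  clear_value Pge
  set Elt := ∫ ω, (if ξ0 ω < t then Real.exp (η * ξ0 ω) else 0) ∂μ with hEltdef
  clear_value Elt
  set Ege := ∫ ω, (if t ≤ ξ0 ω then Real.exp (η * ξ0 ω) else 0) ∂μ with hEgedef
  clear_value Ege
  have hPsum : Plt + Pge = 1 := by
    rw [hPltdef, hPgedef, ← integral_add hind1 hind1']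
    have : (fun ω => (if ξ0 ω < t then (1:ℝ) else 0) + (if t ≤ ξ0 ω then (1:ℝ) else 0))
        = fun _ => (1:ℝ) := by
      funext ω
      rcases lt_or_ge (ξ0 ω) t with h | h
      · simp [h, not_le.mpr h]
      · simp [h, not_lt.mpr h]
    rw [this]
    simp
  have hEsum : Elt + Ege = φη := by
    rw [hEltdef, hEgedef, ← integral_add hindE hindE', hφηdef]
    refine integral_congr_ae (Filter.Eventually.of_forall fun ω => ?_)
    rcases lt_or_ge (ξ0 ω) t with h | h
    · simp [h, not_le.mpr h]
    · simp [h, not_lt.mpr h]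
  have hEltnn : 0 ≤ Elt := by
    rw [hEltdef]
    refine integral_nonneg fun ω => ?_
    dsimp only
    split
    · exact (Real.exp_pos _).le
    · exact le_rfl
  have hPgenn : 0 ≤ Pge := by
    rw [hPgedef]
    refine integral_nonneg fun ω => ?_
    dsimp only; split <;> norm_num
  have hexpηt : Real.exp (-η * t) ≤ 1 := by
    rw [Real.exp_le_one_iff]
    nlinarith
  have hexpεt : Real.exp (-ε * t) ≤ 1 := by
    rw [Real.exp_le_one_iff]
    nlinarith
  have hT : Real.exp (-ε * t) ≤ C₀ * (Pge + q * Real.exp (-η * t) * (Elt - 1)) := by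
    by_cases hcase : (φη - 1) / 2 ≤ Elt - 1
    · have h1 : Real.exp (-ε * t) ≤ Real.exp (-η * t) := Real.exp_le_exp.mpr (by nlinarith)
      have hE := (Real.exp_pos (-η * t)).le
      have h2 : (1:ℝ) * Real.exp (-η * t) ≤ (C₀ * (q * ((φη - 1) / 2))) * Real.exp (-η * t) := by
        refine mul_le_mul_of_nonneg_right ?_ hE
        linarith [hC₀qh]
      have h3 : (C₀ * (q * ((φη - 1) / 2))) * Real.exp (-η * t)
          ≤ C₀ * (q * Real.exp (-η * t) * (Elt - 1)) := by
        have hnn : 0 ≤ C₀ * q * Real.exp (-η * t) := by positivity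
        linarith [mul_le_mul_of_nonneg_left hcase hnn]
      have h4 : C₀ * (q * Real.exp (-η * t) * (Elt - 1))
          ≤ C₀ * (Pge + q * Real.exp (-η * t) * (Elt - 1)) := by
        refine mul_le_mul_of_nonneg_left ?_ hC₀pos.le
        linarith
      linarith
    · push_neg at hcase
      have hEge : (φη - 1) / 2 < Ege := by linarith
      set M := 4 * φ2 / (φη - 1) with hMdef
      clear_value M
      have hM : 0 < M := by rw [hMdef]; exact div_pos (by linarith) hgap
      have hEgeM : Ege ≤ M * Pge + (1 / M) * φ2 := by
        have hrhsint : Integrable (fun ω => M * (if t ≤ ξ0 ω then (1:ℝ) else 0)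
            + (1 / M) * Real.exp (2 * η * ξ0 ω)) μ :=
          (hind1'.const_mul M).add (hint2η.const_mul (1 / M))
        have hpt : ∀ ω, (if t ≤ ξ0 ω then Real.exp (η * ξ0 ω) else 0)
            ≤ M * (if t ≤ ξ0 ω then (1:ℝ) else 0) + (1 / M) * Real.exp (2 * η * ξ0 ω) := by
          intro ω
          have hy := Real.exp_pos (η * ξ0 ω)
          have he2 : Real.exp (2 * η * ξ0 ω) = Real.exp (η * ξ0 ω) * Real.exp (η * ξ0 ω) := by
            rw [← Real.exp_add]; ring_nf
          by_cases hc : t ≤ ξ0 ω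
          · simp only [if_pos hc, mul_one]
            rw [he2]
            have heq9 : (M + 1 / M * (Real.exp (η * ξ0 ω) * Real.exp (η * ξ0 ω)))
                - Real.exp (η * ξ0 ω)
                = ((M - Real.exp (η * ξ0 ω)) ^ 2 + M * Real.exp (η * ξ0 ω)) / M := by
              field_simp
              ring
            have hnn9 : 0 ≤ ((M - Real.exp (η * ξ0 ω)) ^ 2 + M * Real.exp (η * ξ0 ω)) / M := by
              positivity
            linarith
          · simp only [if_neg hc, mul_zero, zero_add]
            positivity
        have h5 := integral_mono hindE' hrhsint hpt
        rw [integral_add (hind1'.const_mul M) (hint2η.const_mul (1 / M)),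
          integral_const_mul, integral_const_mul] at h5
        rw [hEgedef, hPgedef, hφ2def]
        exact h5
      have hMφ2 : (1 / M) * φ2 = (φη - 1) / 4 := by
        rw [hMdef]
        field_simp
      have hPgep : p ≤ Pge := by
        have h4 : (φη - 1) / 4 ≤ M * Pge := by linarith
        have hpeq : p = (φη - 1) / 4 / M := by
          rw [hpdef, hMdef]; field_simp; ring
        rw [hpeq, div_le_iff₀ hM]
        linarith [h4, mul_comm M Pge]
      have hge : -q ≤ q * Real.exp (-η * t) * (Elt - 1) := by
        have h5 : -1 ≤ Real.exp (-η * t) * (Elt - 1) := by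
          linarith [mul_nonneg (Real.exp_pos (-η * t)).le hEltnn, hexpηt]
        linarith [mul_le_mul_of_nonneg_left h5 hq0.le]
      have hbracket : p - q ≤ Pge + q * Real.exp (-η * t) * (Elt - 1) := by linarith
      have h6 : (1:ℝ) ≤ C₀ * (p - q) := by
        linarith [hC₀p, mul_le_mul_of_nonneg_left hqp2 hC₀pos.le]
      have h7 : C₀ * (p - q) ≤ C₀ * (Pge + q * Real.exp (-η * t) * (Elt - 1)) :=
        mul_le_mul_of_nonneg_left hbracket hC₀pos.le
      linarith
  -- assemble
  have hfnn : ∀ ω, 0 ≤ (if ξ0 ω < t then C₀ * (1 - q * Real.exp (-η * (t - ξ0 ω))) else 0) := by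
    intro ω
    by_cases hc : ξ0 ω < t
    · rw [if_pos hc]
      have hs : 0 ≤ t - ξ0 ω := by linarith
      have he : Real.exp (-η * (t - ξ0 ω)) ≤ 1 := by
        rw [Real.exp_le_one_iff]; nlinarith
      have h9 := mul_le_of_le_one_right hq0.le he
      exact mul_nonneg hC₀pos.le (by linarith)
    · simp [hc]
  have hintI : Integrable
      (fun ω => if ξ0 ω < t then C₀ * (1 - q * Real.exp (-η * (t - ξ0 ω))) else 0) μ := by
    refine bdd_integrable μ ?_ C₀ ?_
    · refine Measurable.ite hAm ?_ measurable_const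
      fun_prop
    · intro ω
      rw [abs_of_nonneg (hfnn ω)]
      by_cases hc : ξ0 ω < t
      · rw [if_pos hc]
        have h8 : 0 ≤ q * Real.exp (-η * (t - ξ0 ω)) := by positivity
        nlinarith [h8]
      · rw [if_neg hc]; exact hC₀pos.le
  have hlhs : (∫⁻ ω, (if ξ0 ω < t then
        ENNReal.ofReal (C₀ * (1 - q * Real.exp (-η * (t - ξ0 ω)))) else 0) ∂μ)
      = ENNReal.ofReal (∫ ω,
        (if ξ0 ω < t then C₀ * (1 - q * Real.exp (-η * (t - ξ0 ω))) else 0) ∂μ) := by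
    rw [ofReal_integral_eq_lintegral_ofReal hintI (Filter.Eventually.of_forall hfnn)]
    refine lintegral_congr fun ω => ?_
    by_cases hc : ξ0 ω < t <;> simp [hc]
  rw [hlhs, ← ENNReal.ofReal_add (integral_nonneg hfnn) (Real.exp_pos _).le]
  apply ENNReal.ofReal_le_ofReal
  have hIeq : (∫ ω, (if ξ0 ω < t then C₀ * (1 - q * Real.exp (-η * (t - ξ0 ω))) else 0) ∂μ)
      = C₀ * Plt - (C₀ * q * Real.exp (-η * t)) * Elt := by
    have hfun : (fun ω => if ξ0 ω < t then C₀ * (1 - q * Real.exp (-η * (t - ξ0 ω))) else 0)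
        = fun ω => C₀ * (if ξ0 ω < t then (1:ℝ) else 0)
          - (C₀ * q * Real.exp (-η * t)) * (if ξ0 ω < t then Real.exp (η * ξ0 ω) else 0) := by
      funext ω
      by_cases hc : ξ0 ω < t
      · simp only [if_pos hc]
        rw [show -η * (t - ξ0 ω) = -η * t + η * ξ0 ω by ring, Real.exp_add]
        ring
      · simp [hc]
    rw [hfun, integral_sub (hind1.const_mul C₀) (hindE.const_mul _),
      integral_const_mul, integral_const_mul, hPltdef, hEltdef]
  rw [hIeq]
  have hPlt1 : Plt = 1 - Pge := by linarith
  rw [hPlt1]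
  linarith [hT]



set_option maxHeartbeats 3000000 in
/-- Uniform exponential moment for the overshoot jump: for a centered random walk
with finite positive variance and `E(e^{a S₁}) < ∞` for all `0 ≤ a < δ`, there is
`c > 0` with `sup_{b>0} E[exp(c ΔS_{H_b})] < ∞`, where
`ΔS_{H_b} = S_{H_b} − S_{H_b − 1}`. -/
theorem overshoot_jump_exponential_moment {Ω : Type*} [MeasurableSpace Ω]
    (μ : Measure Ω) [IsProbabilityMeasure μ] (ξ : ℕ → Ω → ℝ) (δ : ℝ) (hδ : 0 < δ)
    (hmeas : ∀ i, Measurable (ξ i))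
    (hindep : iIndepFun ξ μ)
    (hident : ∀ i, IdentDistrib (ξ i) (ξ 0) μ μ)
    (hmean : ∫ ω, ξ 0 ω ∂μ = 0)
    (hsq_int : Integrable (fun ω => (ξ 0 ω) ^ 2) μ)
    (hsq_pos : 0 < ∫ ω, (ξ 0 ω) ^ 2 ∂μ)
    (hexp : ∀ a : ℝ, 0 ≤ a → a < δ →
      Integrable (fun ω => Real.exp (a * ξ 0 ω)) μ) :
    ∃ c > (0 : ℝ), ∃ C : ℝ, ∀ b : ℝ, 0 < b →
      (∫⁻ ω, ENNReal.ofReal (Real.exp (c *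
          (walk ξ (hitAbove₀ (walk ξ) b ω).toNat ω
            - walk ξ ((hitAbove₀ (walk ξ) b ω).toNat - 1) ω))) ∂μ)
        ≤ ENNReal.ofReal C := by
  classical
  have hη : 0 < δ/8 := by linarith
  have hε : 0 < δ/4 := by linarith
  have hintη : Integrable (fun ω => Real.exp ((δ/8) * ξ 0 ω)) μ :=
    hexp (δ/8) (by linarith) (by linarith)
  have hint2η : Integrable (fun ω => Real.exp (2 * (δ/8) * ξ 0 ω)) μ := by
    have := hexp (2 * (δ/8)) (by linarith) (by linarith)
    exact this
  have hintce : Integrable (fun ω => Real.exp ((δ/8 + δ/4) * ξ 0 ω)) μ :=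
    hexp (δ/8 + δ/4) (by linarith) (by linarith)
  have hφη : 1 < ∫ ω, Real.exp ((δ/8) * ξ 0 ω) ∂μ :=
    exp_gt_one μ (ξ 0) (hmeas 0) hmean hsq_int hsq_pos (δ/8) hη hintη
  obtain ⟨C₀, q, hC₀pos, hq0, hq12, hsuper⟩ :=
    super_lemma μ (ξ 0) (hmeas 0) (δ/8) (δ/4) hη (by linarith) hintη hint2η hφη
  set φce := ∫ ω, Real.exp ((δ/8 + δ/4) * ξ 0 ω) ∂μ with hφcedef
  have hφce0 : 0 ≤ φce := by
    rw [hφcedef]; exact integral_nonneg fun ω => (Real.exp_pos _).le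
  refine ⟨δ/8, hη, 1 + φce * C₀, fun b hb => ?_⟩
  set S := walk ξ with hSdef
  have hSm : ∀ i, Measurable (S i) := fun i => Finset.measurable_sum _ fun j _ => hmeas j
  have hS0 : ∀ ω, S 0 ω = 0 := fun ω => Finset.sum_range_zero _
  have hSsucc : ∀ n ω, S (n+1) ω = S n ω + ξ n ω := fun n ω => Finset.sum_range_succ _ _
  set P : ℕ → Ω → Prop := fun n ω => ∀ i ≤ n, S i ω < b with hPdef
  have hPmeas : ∀ n, MeasurableSet {ω | P n ω} := by
    intro n
    have hset : {ω | P n ω} = ⋂ (i : ℕ), ⋂ (_ : i ≤ n), {ω | S i ω < b} := by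
      ext ω; simp [hPdef, Set.mem_iInter]
    rw [hset]
    exact MeasurableSet.iInter fun i => MeasurableSet.iInter fun _ =>
      measurableSet_lt (hSm i) measurable_const
  set vf : ℕ → Ω → ℝ≥0∞ := fun n ω =>
    if P n ω then ENNReal.ofReal (C₀ * (1 - q * Real.exp (-(δ/8) * (b - S n ω)))) else 0
    with hvfdef
  set wf : ℕ → Ω → ℝ≥0∞ := fun n ω =>
    if P n ω then ENNReal.ofReal (Real.exp (-(δ/4) * (b - S n ω))) else 0 with hwfdef
  set jf : ℕ → Ω → ℝ≥0∞ := fun n ω =>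
    if P n ω ∧ b ≤ S (n+1) ω then ENNReal.ofReal (Real.exp ((δ/8) * ξ n ω)) else 0 with hjfdef
  have hwfm : ∀ n, Measurable (wf n) := by
    intro n
    refine Measurable.ite (hPmeas n) ?_ measurable_const
    exact (ENNReal.measurable_ofReal.comp
      (Real.measurable_exp.comp (((hSm n).const_sub b).const_mul _)))
  have hjfm : ∀ n, Measurable (jf n) := by
    intro n
    refine Measurable.ite ((hPmeas n).inter (measurableSet_le measurable_const (hSm (n+1))))
      ?_ measurable_const
    exact (ENNReal.measurable_ofReal.comp (Real.measurable_exp.comp ((hmeas n).const_mul _)))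
  -- Step A : one-step supersolution inequality
  have hstep : ∀ n, (∫⁻ ω, vf (n+1) ω ∂μ) + (∫⁻ ω, wf n ω ∂μ) ≤ ∫⁻ ω, vf n ω ∂μ := by
    intro n
    set Φ : ((Fin n → ℝ) × ℝ) → ℝ≥0∞ := fun z =>
      if ((∀ i ≤ n, psum n i z.1 < b) ∧ psum n n z.1 + z.2 < b) then
        ENNReal.ofReal (C₀ * (1 - q * Real.exp (-(δ/8) * (b - (psum n n z.1 + z.2))))) else 0
      with hΦdef
    have hcondmeas : MeasurableSet {z : (Fin n → ℝ) × ℝ |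
        (∀ i ≤ n, psum n i z.1 < b) ∧ psum n n z.1 + z.2 < b} := by
      have h1 : MeasurableSet {z : (Fin n → ℝ) × ℝ | ∀ i ≤ n, psum n i z.1 < b} := by
        have hset : {z : (Fin n → ℝ) × ℝ | ∀ i ≤ n, psum n i z.1 < b}
            = ⋂ (i : ℕ), ⋂ (_ : i ≤ n), {z : (Fin n → ℝ) × ℝ | psum n i z.1 < b} := by
          ext z; simp [Set.mem_iInter]
        rw [hset]
        exact MeasurableSet.iInter fun i => MeasurableSet.iInter fun _ =>
          measurableSet_lt ((psum_meas n i).comp measurable_fst) measurable_const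
      have h2 : MeasurableSet {z : (Fin n → ℝ) × ℝ | psum n n z.1 + z.2 < b} :=
        measurableSet_lt (((psum_meas n n).comp measurable_fst).add measurable_snd)
          measurable_const
      have h3 := h1.inter h2
      rwa [← Set.setOf_and] at h3
    have hΦm : Measurable Φ := by
      refine Measurable.ite hcondmeas ?_ measurable_const
      exact ENNReal.measurable_ofReal.comp
        ((measurable_const.sub ((Real.measurable_exp.comp
          ((((psum_meas n n).comp measurable_fst).add measurable_snd).const_sub b
            |>.const_mul _)).const_mul q)).const_mul C₀)
    have hps : ∀ ω, ∀ i ≤ n, psum n i (fun j : Fin n => ξ j ω) = S i ω :=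
      fun ω i hi => psum_walk ξ n i hi ω
    have hVsucc : (∫⁻ ω, vf (n+1) ω ∂μ) = ∫⁻ ω, Φ (fun i : Fin n => ξ i ω, ξ n ω) ∂μ := by
      refine lintegral_congr fun ω => ?_
      have hcond : (P (n+1) ω) ↔ ((∀ i ≤ n, psum n i (fun j : Fin n => ξ j ω) < b)
          ∧ psum n n (fun j : Fin n => ξ j ω) + ξ n ω < b) := by
        constructor
        · intro hPP
          refine ⟨fun i hi => by rw [hps ω i hi]; exact hPP i (hi.trans (Nat.le_succ n)), ?_⟩
          rw [hps ω n le_rfl, ← hSsucc]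
          exact hPP (n+1) le_rfl
        · rintro ⟨h1, h2⟩ i hi
          rcases Nat.eq_or_lt_of_le hi with rfl | hlt
          · rw [hSsucc, ← hps ω n le_rfl]; exact h2
          · have hin : i ≤ n := Nat.lt_succ_iff.mp hlt
            rw [← hps ω i hin]; exact h1 i hin
      have hval : b - S (n+1) ω = b - (psum n n (fun j : Fin n => ξ j ω) + ξ n ω) := by
        rw [hps ω n le_rfl, hSsucc]
      simp only [hvfdef, hΦdef]
      exact if_congr hcond (by rw [hval]) rfl
    rw [hVsucc, factor_lemma μ ξ hmeas hindep hident n Φ hΦm]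
    have hbound : ∀ ω, (∫⁻ ω', Φ (fun i : Fin n => ξ i ω, ξ 0 ω') ∂μ) + wf n ω ≤ vf n ω := by
      intro ω
      by_cases hPn : P n ω
      · have ht : 0 < b - S n ω := sub_pos.mpr (hPn n le_rfl)
        have hinner : (∫⁻ ω', Φ (fun i : Fin n => ξ i ω, ξ 0 ω') ∂μ)
            = ∫⁻ ω', (if ξ 0 ω' < b - S n ω then
              ENNReal.ofReal (C₀ * (1 - q * Real.exp (-(δ/8) * ((b - S n ω) - ξ 0 ω')))) else 0)
              ∂μ := by
          refine lintegral_congr fun ω' => ?_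
          have hcond2 : ((∀ i ≤ n, psum n i (fun j : Fin n => ξ j ω) < b)
              ∧ psum n n (fun j : Fin n => ξ j ω) + ξ 0 ω' < b) ↔ (ξ 0 ω' < b - S n ω) := by
            constructor
            · rintro ⟨_, h2⟩
              rw [hps ω n le_rfl] at h2
              linarith
            · intro h
              exact ⟨fun i hi => by rw [hps ω i hi]; exact hPn i hi,
                by rw [hps ω n le_rfl]; linarith⟩
          simp only [hΦdef]
          refine if_congr hcond2 ?_ rfl
          rw [hps ω n le_rfl,
            show b - (S n ω + ξ 0 ω') = (b - S n ω) - ξ 0 ω' from by ring]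
        rw [hinner]
        have hsup := hsuper (b - S n ω) ht
        simp only [hvfdef, hwfdef, if_pos hPn]
        exact hsup
      · have h0 : ∀ ω', Φ (fun i : Fin n => ξ i ω, ξ 0 ω') = 0 := by
          intro ω'
          simp only [hΦdef]
          rw [if_neg]
          rintro ⟨h1, _⟩
          exact hPn fun i hi => by rw [← hps ω i hi]; exact h1 i hi
        have : (∫⁻ ω', Φ (fun i : Fin n => ξ i ω, ξ 0 ω') ∂μ) = 0 := by
          rw [lintegral_congr h0, lintegral_zero]
        rw [this]
        simp only [hvfdef, hwfdef, if_neg hPn]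
        simp
    calc (∫⁻ ω, (∫⁻ ω', Φ (fun i : Fin n => ξ i ω, ξ 0 ω') ∂μ) ∂μ) + ∫⁻ ω, wf n ω ∂μ
        = ∫⁻ ω, ((∫⁻ ω', Φ (fun i : Fin n => ξ i ω, ξ 0 ω') ∂μ) + wf n ω) ∂μ :=
          (lintegral_add_right _ (hwfm n)).symm
      _ ≤ ∫⁻ ω, vf n ω ∂μ := lintegral_mono hbound
  -- V0 bound
  have hV0 : (∫⁻ ω, vf 0 ω ∂μ) ≤ ENNReal.ofReal C₀ := by
    have hle : ∀ ω, vf 0 ω ≤ ENNReal.ofReal C₀ := by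
      intro ω
      by_cases h : P 0 ω
      · simp only [hvfdef, if_pos h]
        refine ENNReal.ofReal_le_ofReal ?_
        have h9 := mul_le_of_le_one_right hq0.le
          (Real.exp_le_one_iff.mpr (by nlinarith [sub_pos.mpr (h 0 le_rfl), hS0 ω] :
            -(δ/8) * (b - S 0 ω) ≤ 0))
        nlinarith [mul_nonneg hC₀pos.le
          (mul_nonneg hq0.le (Real.exp_pos (-(δ/8) * (b - S 0 ω))).le)]
      · simp [hvfdef, if_neg h]
    calc (∫⁻ ω, vf 0 ω ∂μ) ≤ ∫⁻ _, ENNReal.ofReal C₀ ∂μ := lintegral_mono hle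
      _ = ENNReal.ofReal C₀ := by simp
  -- sum of W
  have hWsum : (∑' n, ∫⁻ ω, wf n ω ∂μ) ≤ ENNReal.ofReal C₀ := by
    have hpart : ∀ N, (∑ n ∈ Finset.range N, ∫⁻ ω, wf n ω ∂μ) + (∫⁻ ω, vf N ω ∂μ)
        ≤ ∫⁻ ω, vf 0 ω ∂μ := by
      intro N
      induction N with
      | zero => simp
      | succ N ih =>
        rw [Finset.sum_range_succ]
        calc (∑ n ∈ Finset.range N, ∫⁻ ω, wf n ω ∂μ) + (∫⁻ ω, wf N ω ∂μ)
              + (∫⁻ ω, vf (N+1) ω ∂μ)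
            = (∑ n ∈ Finset.range N, ∫⁻ ω, wf n ω ∂μ)
              + ((∫⁻ ω, vf (N+1) ω ∂μ) + (∫⁻ ω, wf N ω ∂μ)) := by
              rw [add_assoc, add_comm (∫⁻ ω, wf N ω ∂μ)]
          _ ≤ (∑ n ∈ Finset.range N, ∫⁻ ω, wf n ω ∂μ) + (∫⁻ ω, vf N ω ∂μ) :=
              add_le_add le_rfl (hstep N)
          _ ≤ ∫⁻ ω, vf 0 ω ∂μ := ih
    have hpart' : ∀ N, (∑ n ∈ Finset.range N, ∫⁻ ω, wf n ω ∂μ) ≤ ENNReal.ofReal C₀ :=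
      fun N => le_trans (le_trans le_self_add (hpart N)) hV0
    rw [ENNReal.tsum_eq_iSup_sum' (fun N => Finset.range N) ?hdir]
    · exact iSup_le hpart'
    · intro s
      rcases s.eq_empty_or_nonempty with rfl | hs
      · exact ⟨0, by simp⟩
      · exact ⟨s.max' hs + 1, fun i hi =>
          Finset.mem_range.mpr (Nat.lt_succ_of_le (s.le_max' i hi))⟩
  -- Step B: J ≤ φce * W
  have hJle : ∀ n, (∫⁻ ω, jf n ω ∂μ) ≤ ENNReal.ofReal φce * ∫⁻ ω, wf n ω ∂μ := by
    intro n
    set τ : ℝ → ℝ≥0∞ := fun x => ENNReal.ofReal (Real.exp ((δ/8 + δ/4) * x)) with hτdef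
    have hτm : Measurable τ :=
      ENNReal.measurable_ofReal.comp (Real.measurable_exp.comp (measurable_id.const_mul _))
    set u : (Fin n → ℝ) → ℝ≥0∞ := fun v =>
      if (∀ i ≤ n, psum n i v < b) then
        ENNReal.ofReal (Real.exp (-(δ/4) * (b - psum n n v))) else 0 with hudef
    have hum : Measurable u := by
      refine Measurable.ite ?_ ?_ measurable_const
      · have hset : {v : Fin n → ℝ | ∀ i ≤ n, psum n i v < b}
            = ⋂ (i : ℕ), ⋂ (_ : i ≤ n), {v : Fin n → ℝ | psum n i v < b} := by
          ext v; simp [Set.mem_iInter]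
        rw [hset]
        exact MeasurableSet.iInter fun i => MeasurableSet.iInter fun _ =>
          measurableSet_lt (psum_meas n i) measurable_const
      · exact ENNReal.measurable_ofReal.comp
          (Real.measurable_exp.comp (((psum_meas n n).const_sub b).const_mul _))
    have hcomp : (fun ω => u (fun i : Fin n => ξ i ω)) = wf n := by
      funext ω
      have hps2 : ∀ i, i ≤ n → psum n i (fun j : Fin n => ξ j ω) = S i ω :=
        fun i hi => psum_walk ξ n i hi ω
      have hiff : (∀ i ≤ n, psum n i (fun j : Fin n => ξ j ω) < b) ↔ P n ω :=
        ⟨fun h i hi => by rw [← hps2 i hi]; exact h i hi,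
         fun h i hi => by rw [hps2 i hi]; exact h i hi⟩
      simp only [hudef, hwfdef]
      exact if_congr hiff (by rw [hps2 n le_rfl]) rfl
    have hind : IndepFun (fun ω => u (fun i : Fin n => ξ i ω)) (fun ω => τ (ξ n ω)) μ :=
      (indep_tuple ξ hmeas hindep n).comp hum hτm
    have hind' : IndepFun (wf n) (fun ω => τ (ξ n ω)) μ := hcomp ▸ hind
    have hpw : ∀ ω, jf n ω ≤ wf n ω * τ (ξ n ω) := by
      intro ω
      by_cases hc : P n ω ∧ b ≤ S (n+1) ω
      · have h3 : b - S n ω ≤ ξ n ω := by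
          have := hSsucc n ω
          have := hc.2
          linarith
        simp only [hjfdef, hwfdef, hτdef, if_pos hc, if_pos hc.1]
        rw [← ENNReal.ofReal_mul (Real.exp_pos _).le, ← Real.exp_add]
        refine ENNReal.ofReal_le_ofReal (Real.exp_le_exp.mpr ?_)
        nlinarith [hε]
      · simp only [hjfdef, if_neg hc]
        exact zero_le
    calc (∫⁻ ω, jf n ω ∂μ) ≤ ∫⁻ ω, wf n ω * τ (ξ n ω) ∂μ := lintegral_mono hpw
      _ = (∫⁻ ω, wf n ω ∂μ) * ∫⁻ ω, τ (ξ n ω) ∂μ :=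
          lintegral_mul_eq_lintegral_mul_lintegral_of_indepFun (hwfm n)
            (hτm.comp (hmeas n)) hind'
      _ = (∫⁻ ω, wf n ω ∂μ) * ENNReal.ofReal φce := by
          rw [ident_lint ξ hmeas hident n τ hτm]
          congr 1
          rw [hτdef, hφcedef]
          exact (ofReal_integral_eq_lintegral_ofReal hintce
            (Filter.Eventually.of_forall fun ω => (Real.exp_pos _).le)).symm
      _ = ENNReal.ofReal φce * ∫⁻ ω, wf n ω ∂μ := mul_comm _ _
  -- pointwise overshoot bound
  have hpoint : ∀ ω, ENNReal.ofReal (Real.exp ((δ/8) *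
      (S (hitAbove₀ S b ω).toNat ω - S ((hitAbove₀ S b ω).toNat - 1) ω)))
      ≤ 1 + ∑' n, jf n ω := by
    intro ω
    by_cases hne : {i : ℕ | b ≤ S i ω}.Nonempty
    · set k := sInf {i : ℕ | b ≤ S i ω} with hkdef
      have hmem : b ≤ S k ω := Nat.sInf_mem hne
      have hkne : k ≠ 0 := by
        intro h0
        rw [h0, hS0 ω] at hmem
        linarith
      obtain ⟨n, hn⟩ := Nat.exists_eq_succ_of_ne_zero hkne
      have hHA : hitAbove₀ S b ω = (k : ℕ∞) := by
        refine le_antisymm (sInf_le ⟨k, hmem, rfl⟩) (le_sInf ?_)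
        rintro e ⟨i, hi, rfl⟩
        show (k : ℕ∞) ≤ (i : ℕ∞)
        exact_mod_cast Nat.sInf_le hi
      rw [hHA, ENat.toNat_coe, hn]
      have hjn : jf n ω = ENNReal.ofReal (Real.exp ((δ/8) * ξ n ω)) := by
        simp only [hjfdef]
        rw [if_pos]
        constructor
        · intro i hi
          by_contra hh
          push_neg at hh
          have hle := Nat.sInf_le (show i ∈ {i : ℕ | b ≤ S i ω} from hh)
          omega
        · rw [show n + 1 = k from hn.symm]
          exact hmem
      have harg : S (n+1) ω - S (n+1-1) ω = ξ n ω := by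
        simp only [Nat.add_sub_cancel, Nat.succ_sub_one]
        rw [hSsucc]
        ring
      rw [harg, ← hjn]
      exact le_trans (ENNReal.le_tsum n) le_add_self
    · have him : hitAbove₀ S b ω = ⊤ := by
        rw [Set.not_nonempty_iff_eq_empty] at hne
        rw [hitAbove₀, hne]
        simp
      rw [him]
      simp only [ENat.toNat_top, Nat.zero_sub, sub_self, mul_zero, Real.exp_zero,
        ENNReal.ofReal_one]
      exact le_self_add
  -- final chain
  calc (∫⁻ ω, ENNReal.ofReal (Real.exp ((δ/8) *
        (S (hitAbove₀ S b ω).toNat ω - S ((hitAbove₀ S b ω).toNat - 1) ω))) ∂μ)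
      ≤ ∫⁻ ω, (1 + ∑' n, jf n ω) ∂μ := lintegral_mono hpoint
    _ = (∫⁻ _, (1:ℝ≥0∞) ∂μ) + ∫⁻ ω, ∑' n, jf n ω ∂μ := lintegral_add_left measurable_const _
    _ = 1 + ∑' n, ∫⁻ ω, jf n ω ∂μ := by
        rw [lintegral_const, lintegral_tsum fun n => (hjfm n).aemeasurable]
        simp
    _ ≤ 1 + ∑' n, ENNReal.ofReal φce * ∫⁻ ω, wf n ω ∂μ :=
        add_le_add le_rfl (ENNReal.tsum_le_tsum hJle)
    _ = 1 + ENNReal.ofReal φce * ∑' n, ∫⁻ ω, wf n ω ∂μ := by rw [ENNReal.tsum_mul_left]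
    _ ≤ 1 + ENNReal.ofReal φce * ENNReal.ofReal C₀ :=
        add_le_add le_rfl (mul_le_mul_right hWsum _)
    _ = ENNReal.ofReal (1 + φce * C₀) := by
        rw [ENNReal.ofReal_add (by norm_num) (mul_nonneg hφce0 hC₀pos.le),
          ENNReal.ofReal_one, ENNReal.ofReal_mul hφce0]
end
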